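/- Let $K : (\mathbb{R}^n)^{m} \setminus \{ \vec y : \text{all } y_j = x \} \to [0, \infty)$ satisfy $K(\vec y) \le A \left( \sum_{j=1}^m |x - y_j| \right)^{-mn}$ for a fixed $x \in \mathbb{R}^n$ and $A > 0$. Let $\delta > 0$ and suppose $f_1, \dots, f_m$ are locally integrable on $\mathbb{R}^n$. Then $\int_{\{\vec y : \sum_j |x - y_j|^2 \ge \delta^2,\ \min_j |x - y_j| < \delta \}} K(\vec y) \prod_{j=1}^m |f_j(y_j)| \, d\vec y \le C A \prod_{j=1}^m M f_j(x)$, where $M$ is the Hardy–Littlewood maximal operator and $C$ depends only on $n$ and $m$. -/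

import Mathlib

open MeasureTheory ENNReal

/-- The (centered) Hardy–Littlewood maximal operator on `ℝⁿ`. -/
noncomputable def hlMaximal {n : ℕ} (f : EuclideanSpace ℝ (Fin n) → ℝ)
    (x : EuclideanSpace ℝ (Fin n)) : ℝ≥0∞ :=
  ⨆ (r : ℝ) (_ : 0 < r),
    (volume (Metric.ball x r))⁻¹ * ∫⁻ y in Metric.ball x r, (‖f y‖₊ : ℝ≥0∞)

lemma lintegral_pi_prod_meas {α : Type*} [MeasurableSpace α] (μ : Measure α) [SigmaFinite μ] :
    ∀ (m : ℕ) (g : Fin m → α → ℝ≥0∞), (∀ i, Measurable (g i)) →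
      ∫⁻ y, ∏ i, g i (y i) ∂Measure.pi (fun _ : Fin m => μ) = ∏ i, ∫⁻ t, g i t ∂μ
  | 0, g, _ => by
      simp [MeasureTheory.lintegral_const, Measure.pi_univ]
  | (m + 1), g, hg => by
      have hmp := measurePreserving_piFinSuccAbove (fun _ : Fin (m + 1) => μ) 0
      have h1 := hmp.lintegral_map_equiv
        (fun p : α × (Fin m → α) => g 0 p.1 * ∏ j : Fin m, g j.succ (p.2 j))
        (MeasurableEquiv.piFinSuccAbove (fun _ : Fin (m + 1) => α) 0)
      have h2 : ∫⁻ y, ∏ i, g i (y i) ∂Measure.pi (fun _ : Fin (m + 1) => μ)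
          = ∫⁻ p : α × (Fin m → α), g 0 p.1 * ∏ j : Fin m, g j.succ (p.2 j)
              ∂(μ.prod (Measure.pi fun _ : Fin m => μ)) := by
        rw [h1]
        refine lintegral_congr fun y => ?_
        rw [Fin.prod_univ_succ]
        simp [MeasurableEquiv.piFinSuccAbove, Fin.succAbove_zero, Fin.tail]
      have h3 := lintegral_prod_mul (μ := μ) (ν := Measure.pi fun _ : Fin m => μ)
        (f := fun t => g 0 t) (g := fun v : Fin m → α => ∏ j : Fin m, g j.succ (v j))
        (hg 0).aemeasurable
        (Finset.measurable_prod Finset.univ fun j _ =>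
          (hg j.succ).comp (measurable_pi_apply j)).aemeasurable
      rw [h2]
      refine h3.trans ?_
      rw [lintegral_pi_prod_meas μ m (fun j => g j.succ) (fun j => hg j.succ),
        Fin.prod_univ_succ]

lemma lintegral_pi_set_prod {α : Type*} [MeasurableSpace α] (μ : Measure α) [SigmaFinite μ]
    {m : ℕ} (g : Fin m → α → ℝ≥0∞) (hg : ∀ j, AEMeasurable (g j) μ)
    (s : Fin m → Set α) (hs : ∀ j, MeasurableSet (s j)) :
    ∫⁻ y in Set.pi Set.univ s, ∏ j, g j (y j) ∂Measure.pi (fun _ : Fin m => μ)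
      = ∏ j, ∫⁻ t in s j, g j t ∂μ := by
  have hpiS : MeasurableSet (Set.pi Set.univ s) := MeasurableSet.univ_pi hs
  rw [← lintegral_indicator hpiS]
  have hind : ∀ y : Fin m → α,
      (Set.pi Set.univ s).indicator (fun y => ∏ j, g j (y j)) y
        = ∏ j, (s j).indicator (g j) (y j) := by
    intro y
    by_cases h : y ∈ Set.pi Set.univ s
    · rw [Set.indicator_of_mem h]
      exact Finset.prod_congr rfl fun j _ =>
        (Set.indicator_of_mem (h j (Set.mem_univ j)) _).symm
    · rw [Set.indicator_of_notMem h]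
      rw [Set.mem_univ_pi] at h
      push_neg at h
      obtain ⟨j, hj⟩ := h
      exact (Finset.prod_eq_zero (Finset.mem_univ j) (Set.indicator_of_notMem hj _)).symm
  simp_rw [hind]
  have hmk : ∀ j, ∀ᵐ y : Fin m → α ∂Measure.pi (fun _ => μ),
      g j (y j) = (hg j).mk (g j) (y j) := by
    intro j
    have h0 : μ {t | ¬ g j t = (hg j).mk (g j) t} = 0 := (hg j).ae_eq_mk
    have h1 := Measure.pi_eval_preimage_null (μ := fun _ : Fin m => μ) (i := j) h0
    rw [ae_iff]
    exact h1
  have hae : ∀ᵐ y ∂Measure.pi (fun _ : Fin m => μ),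
      (∏ j, (s j).indicator (g j) (y j)) = ∏ j, (s j).indicator ((hg j).mk (g j)) (y j) := by
    filter_upwards [ae_all_iff.2 hmk] with y hy
    refine Finset.prod_congr rfl fun j _ => ?_
    classical
    rw [Set.indicator_apply, Set.indicator_apply, hy j]
  rw [lintegral_congr_ae hae,
    lintegral_pi_prod_meas μ m _ (fun j => ((hg j).measurable_mk).indicator (hs j))]
  refine Finset.prod_congr rfl fun j _ => ?_
  rw [lintegral_indicator (hs j)]
  exact lintegral_congr_ae (ae_restrict_of_ae ((hg j).ae_eq_mk.symm))

lemma lintegral_ball_le_maximal {n : ℕ} (f : EuclideanSpace ℝ (Fin n) → ℝ)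
    (x : EuclideanSpace ℝ (Fin n)) {r : ℝ} (hr : 0 < r) :
    ∫⁻ t in Metric.ball x r, (‖f t‖₊ : ℝ≥0∞) ∂volume
      ≤ volume (Metric.ball x r) * hlMaximal f x := by
  have h0 : volume (Metric.ball x r) ≠ 0 := (Metric.measure_ball_pos volume x hr).ne'
  have ht : volume (Metric.ball x r) ≠ ⊤ := measure_ball_lt_top.ne
  have hle : (volume (Metric.ball x r))⁻¹ * ∫⁻ t in Metric.ball x r, (‖f t‖₊ : ℝ≥0∞)
      ≤ hlMaximal f x :=
    le_iSup₂ (f := fun (r : ℝ) (_ : 0 < r) =>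
      (volume (Metric.ball x r))⁻¹ * ∫⁻ t in Metric.ball x r, (‖f t‖₊ : ℝ≥0∞)) r hr
  calc ∫⁻ t in Metric.ball x r, (‖f t‖₊ : ℝ≥0∞) ∂volume
      = volume (Metric.ball x r) *
        ((volume (Metric.ball x r))⁻¹ * ∫⁻ t in Metric.ball x r, (‖f t‖₊ : ℝ≥0∞)) := by
        rw [← mul_assoc, ENNReal.mul_inv_cancel h0 ht, one_mul]
    _ ≤ volume (Metric.ball x r) * hlMaximal f x := mul_le_mul_right hle _


/-- pointwise estimate for the kernel integral over the truncation-error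
region `(U_δ(x) ∪ V_δ(x))ᶜ`. -/
theorem stmt_10 (n m : ℕ) (hn : 0 < n) (hm : 1 ≤ m) :
    ∃ C : ℝ, 0 < C ∧
      ∀ (x : EuclideanSpace ℝ (Fin n)) (A δ : ℝ), 0 < A → 0 < δ →
      ∀ (K : (Fin m → EuclideanSpace ℝ (Fin n)) → ℝ),
        (∀ y, 0 ≤ K y) →
        (∀ y : Fin m → EuclideanSpace ℝ (Fin n), (¬ ∀ j, y j = x) →
          K y ≤ A * (∑ j, ‖x - y j‖) ^ (-(m * n : ℝ))) →
      ∀ f : Fin m → EuclideanSpace ℝ (Fin n) → ℝ,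
        (∀ j, LocallyIntegrable (f j) volume) →
        (∫⁻ y in {y : Fin m → EuclideanSpace ℝ (Fin n) |
            δ ^ 2 ≤ ∑ j, ‖x - y j‖ ^ 2 ∧ ∃ j, ‖x - y j‖ < δ},
          ENNReal.ofReal (K y) * ∏ j, (‖f j (y j)‖₊ : ℝ≥0∞)) ≤
        ENNReal.ofReal (C * A) * ∏ j, hlMaximal (f j) x := by
  classical
  obtain ⟨m', rfl⟩ : ∃ m', m = m' + 1 := ⟨m - 1, by omega⟩
  set m := m' + 1 with hm_def
  haveI : Nonempty (Fin n) := ⟨⟨0, hn⟩⟩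
  haveI : Nontrivial (EuclideanSpace ℝ (Fin n)) := inferInstance
  set Bv : ℝ≥0∞ := volume (Metric.ball (0 : EuclideanSpace ℝ (Fin n)) 1) with hBv_def
  have hBv0 : Bv ≠ 0 := (Metric.measure_ball_pos volume _ one_pos).ne'
  have hBvt : Bv ≠ ⊤ := measure_ball_lt_top.ne
  set Bt : ℝ := Bv.toReal with hBt_def
  have hBtpos : 0 < Bt := ENNReal.toReal_pos hBv0 hBvt
  set q : ℝ := ((2:ℝ)^n)⁻¹ with hq_def
  have hq0 : 0 < q := by positivity
  have hq1 : q < 1 := by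
    rw [hq_def]
    exact inv_lt_one_of_one_lt₀ (one_lt_pow₀ (by norm_num) hn.ne')
  have h1q : 0 < 1 - q := by linarith
  refine ⟨(m : ℝ) * 2^(m*n) * Bt^m * (1-q)⁻¹, ?_, ?_⟩
  · have hm0 : (0:ℝ) < m := by positivity
    have := inv_pos.2 h1q
    positivity
  intro x A δ hA hδ K hK0 hKb f hf
  set F : (Fin m → EuclideanSpace ℝ (Fin n)) → ℝ := fun y => ∑ j, ‖x - y j‖ with hF_def
  have hFmeas : Measurable F := by
    apply Finset.measurable_sum
    intro j _
    exact (measurable_const.sub (measurable_pi_apply j)).norm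
  set S : ℕ → Fin m → Set (Fin m → EuclideanSpace ℝ (Fin n)) := fun k i =>
    {y | 2^k * δ ≤ F y ∧ F y < 2^(k+1) * δ ∧ ‖x - y i‖ < δ} with hS_def
  have hSmeas : ∀ k i, MeasurableSet (S k i) := by
    intro k i
    rw [hS_def]
    simp only [Set.setOf_and]
    exact (measurableSet_le measurable_const hFmeas).inter
      ((measurableSet_lt hFmeas measurable_const).inter
        (measurableSet_lt ((measurable_const.sub (measurable_pi_apply i)).norm)
          measurable_const))
  -- step A : inclusion in the union
  have hsub : {y : Fin m → EuclideanSpace ℝ (Fin n) |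
      δ ^ 2 ≤ ∑ j, ‖x - y j‖ ^ 2 ∧ ∃ j, ‖x - y j‖ < δ} ⊆ ⋃ (p : ℕ × Fin m), S p.1 p.2 := by
    rintro y ⟨h1, i, hi⟩
    have hFy : δ ≤ F y := by
      have h2 : ∑ j, ‖x - y j‖^2 ≤ (∑ j, ‖x - y j‖)^2 :=
        Finset.sum_sq_le_sq_sum_of_nonneg (fun j _ => norm_nonneg _)
      have h3 : δ^2 ≤ (F y)^2 := le_trans h1 h2
      by_contra hcon
      push_neg at hcon
      have h4 : (F y)^2 < δ^2 := by
        have hF0 : 0 ≤ F y := Finset.sum_nonneg fun j _ => norm_nonneg _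
        exact pow_lt_pow_left₀ hcon hF0 (by norm_num)
      linarith
    have hPex : ∃ k : ℕ, F y < 2^k * δ := by
      obtain ⟨k, hk⟩ := pow_unbounded_of_one_lt (F y / δ) (one_lt_two (α := ℝ))
      exact ⟨k, by rw [div_lt_iff₀ hδ] at hk; linarith⟩
    set k0 := Nat.find hPex with hk0_def
    have hk0spec : F y < 2^k0 * δ := Nat.find_spec hPex
    have hk0pos : 0 < k0 := by
      rcases Nat.eq_zero_or_pos k0 with h | h
      · exfalso
        rw [h] at hk0spec
        simp only [pow_zero, one_mul] at hk0spec
        linarith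
      · exact h
    refine Set.mem_iUnion.2 ⟨(k0 - 1, i), ?_, ?_, hi⟩
    · have := Nat.find_min hPex (m := k0 - 1) (by omega)
      push_neg at this
      exact this
    · have hk0' : k0 - 1 + 1 = k0 := by omega
      rw [hk0']
      exact hk0spec
  -- per-piece estimate
  have hstep : ∀ (k : ℕ) (i : Fin m),
      (∫⁻ y in S k i, ENNReal.ofReal (K y) * ∏ j, (‖f j (y j)‖₊ : ℝ≥0∞)) ≤
        ENNReal.ofReal (A * (Bt^m * (2^(m*n) * q^k))) * ∏ j, hlMaximal (f j) x := by
    intro k i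
    set t : ℝ := 2^k * δ with ht_def
    have htpos : 0 < t := by rw [ht_def]; positivity
    set R : ℝ := 2^(k+1) * δ with hR_def
    have hRpos : 0 < R := by rw [hR_def]; positivity
    set r : Fin m → ℝ := fun j => if j = i then δ else R with hr_def
    have hrpos : ∀ j, 0 < r j := by
      intro j; rw [hr_def]; dsimp only; split <;> [exact hδ; exact hRpos]
    have hrnonneg : ∀ j, 0 ≤ r j := fun j => (hrpos j).le
    -- pointwise kernel bound on S k i
    have hpt : ∀ y ∈ S k i, ENNReal.ofReal (K y) * ∏ j, (‖f j (y j)‖₊ : ℝ≥0∞)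
        ≤ ENNReal.ofReal (A * t ^ (-(m * n : ℝ))) * ∏ j, (‖f j (y j)‖₊ : ℝ≥0∞) := by
      intro y hy
      obtain ⟨hy1, hy2, hy3⟩ := hy
      refine mul_le_mul_left (ENNReal.ofReal_le_ofReal ?_) _
      have hne : ¬ ∀ j, y j = x := by
        intro hall
        have hF0 : F y = 0 := by
          rw [hF_def]
          simp [hall]
        rw [hF0] at hy1
        nlinarith
      refine le_trans (hKb y hne) ?_
      refine mul_le_mul_of_nonneg_left ?_ hA.le
      exact Real.rpow_le_rpow_of_nonpos htpos hy1 (neg_nonpos.mpr (by positivity))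
    -- geometric inclusion in a product of balls
    have hsub2 : S k i ⊆ Set.pi Set.univ (fun j => Metric.ball x (r j)) := by
      rintro y ⟨hy1, hy2, hy3⟩ j _
      rw [Metric.mem_ball, dist_eq_norm, ← norm_sub_rev]
      rw [hr_def]; dsimp only
      by_cases hj : j = i
      · rw [if_pos hj, hj]; exact hy3
      · rw [if_neg hj]
        refine lt_of_le_of_lt ?_ hy2
        exact Finset.single_le_sum (f := fun j => ‖x - y j‖)
          (fun j _ => norm_nonneg _) (Finset.mem_univ j)
    -- volume of balls
    have hballvol : ∀ rr : ℝ, 0 ≤ rr →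
        volume (Metric.ball x rr) = ENNReal.ofReal (rr ^ n) * Bv := by
      intro rr hrr
      rw [hBv_def, Measure.addHaar_ball volume x hrr, finrank_euclideanSpace_fin]
    have hri : r i = δ := by simp [hr_def]
    have hrR : ∀ j, j ≠ i → r j = R := by
      intro j hj; simp [hr_def, hj]
    have hprodvol : ∏ j, volume (Metric.ball x (r j))
        = (ENNReal.ofReal (δ^n) * Bv) * (ENNReal.ofReal (R^n) * Bv)^(m-1) := by
      rw [← Finset.mul_prod_erase Finset.univ _ (Finset.mem_univ i)]
      have h2 : ∀ j ∈ Finset.univ.erase i, volume (Metric.ball x (r j))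
          = ENNReal.ofReal (R^n) * Bv := by
        intro j hj
        rw [hrR j (Finset.ne_of_mem_erase hj), hballvol R hRpos.le]
      rw [Finset.prod_congr rfl h2, Finset.prod_const,
        Finset.card_erase_of_mem (Finset.mem_univ i), Finset.card_univ, Fintype.card_fin,
        hri, hballvol δ hδ.le]
    -- scalar inequality
    have key : t ^ (-(m * n : ℝ)) * (δ^n * (R^n)^(m-1)) ≤ 2^(m*n) * q^k := by
      have hcast : (m * n : ℝ) = ((m*n : ℕ) : ℝ) := by push_cast; ring
      have h1 : t ^ (-(m * n : ℝ)) = (t ^ (m*n : ℕ))⁻¹ := by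
        rw [hcast, Real.rpow_neg htpos.le, Real.rpow_natCast]
      have h2 : q^k = ((2:ℝ)^(n*k))⁻¹ := by
        rw [hq_def, inv_pow, ← pow_mul]
      rw [h1, h2, inv_mul_eq_div, ← div_eq_mul_inv, div_le_div_iff₀ (by positivity) (by positivity)]
      have hmsub : m - 1 = m' := by omega
      rw [hmsub, hR_def, ht_def]
      have hEq : (2:ℝ)^(m*n) * ((2^k * δ) ^ (m*n))
          = (δ^n * (((2:ℝ)^(k+1) * δ)^n)^m' * 2^(n*k)) * 2^n := by
        rw [hm_def]
        simp only [mul_pow, ← pow_mul, ← pow_add]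
        ring
      rw [hEq]
      exact le_mul_of_one_le_right (by positivity) (one_le_pow₀ (by norm_num))
    have hreal : (A * t ^ (-(m * n : ℝ))) * ((δ^n * Bt) * (R^n * Bt)^(m-1))
        ≤ A * (Bt^m * (2^(m*n) * q^k)) := by
      have hmsub : m - 1 = m' := by omega
      rw [hmsub] at key ⊢
      calc (A * t ^ (-(m * n : ℝ))) * ((δ^n * Bt) * (R^n * Bt)^m')
          = (A * Bt^m) * (t ^ (-(m * n : ℝ)) * (δ^n * (R^n)^m')) := by
            rw [hm_def]; ring
        _ ≤ (A * Bt^m) * (2^(m*n) * q^k) := by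
            refine mul_le_mul_of_nonneg_left key ?_
            positivity
        _ = A * (Bt^m * (2^(m*n) * q^k)) := by ring
    have hscalar : ENNReal.ofReal (A * t ^ (-(m * n : ℝ))) *
        ((ENNReal.ofReal (δ^n) * Bv) * (ENNReal.ofReal (R^n) * Bv)^(m-1))
        ≤ ENNReal.ofReal (A * (Bt^m * (2^(m*n) * q^k))) := by
      have hBveq : Bv = ENNReal.ofReal Bt := (ENNReal.ofReal_toReal hBvt).symm
      rw [hBveq]
      rw [show ENNReal.ofReal (R^n) * ENNReal.ofReal Bt = ENNReal.ofReal (R^n * Bt) from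
        (ENNReal.ofReal_mul (by positivity)).symm]
      rw [← ENNReal.ofReal_pow (by positivity)]
      rw [show ENNReal.ofReal (δ^n) * ENNReal.ofReal Bt = ENNReal.ofReal (δ^n * Bt) from
        (ENNReal.ofReal_mul (by positivity)).symm]
      rw [← ENNReal.ofReal_mul (by positivity),
        ← ENNReal.ofReal_mul (mul_nonneg hA.le (Real.rpow_nonneg htpos.le _))]
      exact ENNReal.ofReal_le_ofReal hreal
    -- chain
    calc ∫⁻ y in S k i, ENNReal.ofReal (K y) * ∏ j, (‖f j (y j)‖₊ : ℝ≥0∞)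
        ≤ ∫⁻ y in S k i, ENNReal.ofReal (A * t ^ (-(m * n : ℝ)))
            * ∏ j, (‖f j (y j)‖₊ : ℝ≥0∞) := setLIntegral_mono' (hSmeas k i) hpt
      _ = ENNReal.ofReal (A * t ^ (-(m * n : ℝ)))
            * ∫⁻ y in S k i, ∏ j, (‖f j (y j)‖₊ : ℝ≥0∞) :=
          lintegral_const_mul' _ _ ENNReal.ofReal_ne_top
      _ ≤ ENNReal.ofReal (A * t ^ (-(m * n : ℝ)))
            * ∫⁻ y in Set.pi Set.univ (fun j => Metric.ball x (r j)),
                ∏ j, (‖f j (y j)‖₊ : ℝ≥0∞) :=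
          mul_le_mul_right (lintegral_mono_set hsub2) _
      _ = ENNReal.ofReal (A * t ^ (-(m * n : ℝ)))
            * ∏ j, ∫⁻ s in Metric.ball x (r j), (‖f j s‖₊ : ℝ≥0∞) ∂volume := by
          rw [MeasureTheory.volume_pi, lintegral_pi_set_prod volume
            (fun j => fun s => (‖f j s‖₊ : ℝ≥0∞))
            (fun j => (hf j).aestronglyMeasurable.enorm)
            (fun j => Metric.ball x (r j)) (fun j => measurableSet_ball)]
      _ ≤ ENNReal.ofReal (A * t ^ (-(m * n : ℝ)))
            * ∏ j, (volume (Metric.ball x (r j)) * hlMaximal (f j) x) :=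
          mul_le_mul_right (Finset.prod_le_prod' fun j _ =>
            lintegral_ball_le_maximal (f j) x (hrpos j)) _
      _ = (ENNReal.ofReal (A * t ^ (-(m * n : ℝ)))
            * ∏ j, volume (Metric.ball x (r j))) * ∏ j, hlMaximal (f j) x := by
          rw [Finset.prod_mul_distrib, mul_assoc]
      _ ≤ ENNReal.ofReal (A * (Bt^m * (2^(m*n) * q^k))) * ∏ j, hlMaximal (f j) x := by
          refine mul_le_mul_left ?_ _
          rw [hprodvol]
          exact hscalar
  -- assemble
  calc (∫⁻ y in {y : Fin m → EuclideanSpace ℝ (Fin n) |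
          δ ^ 2 ≤ ∑ j, ‖x - y j‖ ^ 2 ∧ ∃ j, ‖x - y j‖ < δ},
        ENNReal.ofReal (K y) * ∏ j, (‖f j (y j)‖₊ : ℝ≥0∞))
      ≤ ∫⁻ y in ⋃ (p : ℕ × Fin m), S p.1 p.2,
          ENNReal.ofReal (K y) * ∏ j, (‖f j (y j)‖₊ : ℝ≥0∞) := lintegral_mono_set hsub
    _ ≤ ∑' (p : ℕ × Fin m), ∫⁻ y in S p.1 p.2,
          ENNReal.ofReal (K y) * ∏ j, (‖f j (y j)‖₊ : ℝ≥0∞) :=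
        lintegral_iUnion_le _ _
    _ ≤ ∑' (p : ℕ × Fin m), ENNReal.ofReal (A * (Bt^m * (2^(m*n) * q^p.1)))
          * ∏ j, hlMaximal (f j) x := ENNReal.tsum_le_tsum fun p => hstep p.1 p.2
    _ = (∑' (p : ℕ × Fin m), ENNReal.ofReal (A * (Bt^m * (2^(m*n) * q^p.1))))
          * ∏ j, hlMaximal (f j) x := ENNReal.tsum_mul_right
    _ ≤ ENNReal.ofReal (((m : ℝ) * 2^(m*n) * Bt^m * (1-q)⁻¹) * A)
          * ∏ j, hlMaximal (f j) x := by
        refine mul_le_mul_left ?_ _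
        rw [ENNReal.tsum_prod (f := fun (k : ℕ) (_ : Fin m) => ENNReal.ofReal (A * (Bt^m * (2^(m*n) * q^k))))]
        have hinner : ∀ k : ℕ, (∑' _ : Fin m, ENNReal.ofReal (A * (Bt^m * (2^(m*n) * q^k))))
            = (m : ℝ≥0∞) * ENNReal.ofReal (A * (Bt^m * (2^(m*n) * q^k))) := by
          intro k
          rw [tsum_fintype]
          simp [Finset.sum_const, Fintype.card_fin, nsmul_eq_mul]
        rw [tsum_congr hinner]
        have hofr : ∀ k : ℕ, ENNReal.ofReal (A * (Bt^m * (2^(m*n) * q^k)))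
            = ENNReal.ofReal (A * (Bt^m * 2^(m*n))) * (ENNReal.ofReal q)^k := by
          intro k
          rw [← ENNReal.ofReal_pow hq0.le, ← ENNReal.ofReal_mul (by positivity)]
          congr 1
          ring
        rw [tsum_congr (fun k => by rw [hofr k])]
        rw [ENNReal.tsum_mul_left, ENNReal.tsum_mul_left, ENNReal.tsum_geometric]
        have hgeo : (1 - ENNReal.ofReal q)⁻¹ = ENNReal.ofReal ((1-q)⁻¹) := by
          rw [← ENNReal.ofReal_one, ← ENNReal.ofReal_sub _ hq0.le,
            ENNReal.ofReal_inv_of_pos h1q]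
        rw [hgeo]
        rw [← ENNReal.ofReal_natCast m, ← ENNReal.ofReal_mul (by positivity),
          ← ENNReal.ofReal_mul (by positivity)]
        refine ENNReal.ofReal_le_ofReal (le_of_eq ?_)
        ring
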